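/- The 2-break distance between two genomes P and Q on the same n genes equals n − c(P,Q), where c(P,Q) is the number of black-gray cycles in the breakpoint graph G(P,Q). -/

import Mathlib

open Finset

/-- A genome on a vertex set `V` of gene extremities: a perfect matching,
encoded as a fixed-point-free involution. -/
structure Genome (V : Type*) [Fintype V] [DecidableEq V] where
  perm : Equiv.Perm V
  invol : ∀ v, perm (perm v) = v
  noFix : ∀ v, perm v ≠ v

namespace Genome

variable {V : Type*} [Fintype V] [DecidableEq V]

/-- Number of vertices whose matching partner differs between `P` and `P'`
(each changed black edge contributes 2 vertices). -/
def changed (P P' : Genome V) : ℕ :=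
  (univ.filter fun v => P.perm v ≠ P'.perm v).card

/-- A 2-break changes exactly 2 black edges. -/
def Is2Break (P P' : Genome V) : Prop := changed P P' = 4

/-- A complete 3-break changes exactly 3 black edges. -/
def IsComplete3Break (P P' : Genome V) : Prop := changed P P' = 6

/-- A 3-break changes 2 or 3 black edges. -/
def Is3Break (P P' : Genome V) : Prop := Is2Break P P' ∨ IsComplete3Break P P'

/-- The permutation whose orbits trace the black-gray alternating cycles of the
breakpoint graph `G(P,Q)`; each alternating cycle with `k` black edges yields
exactly two orbits of size `k`. -/
def sigma (P Q : Genome V) : Equiv.Perm V := Q.perm * P.perm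

/-- Number of orbits of a permutation (nontrivial cycles plus fixed points). -/
def orbitsCard (σ : Equiv.Perm V) : ℕ :=
  Multiset.card σ.cycleType + (univ.filter fun v => σ v = v).card

/-- Number of odd-size orbits of a permutation. -/
def oddOrbitsCard (σ : Equiv.Perm V) : ℕ :=
  Multiset.card (σ.cycleType.filter fun k => Odd k) +
    (univ.filter fun v => σ v = v).card

/-- `c P Q`: the number of black-gray cycles in the breakpoint graph `G(P,Q)`. -/
def c (P Q : Genome V) : ℕ := orbitsCard (sigma P Q) / 2

/-- `cOdd P Q`: the number of black-gray cycles with an odd number of black edges. -/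
def cOdd (P Q : Genome V) : ℕ := oddOrbitsCard (sigma P Q) / 2

/-- `cEven P Q`: the number of black-gray cycles with an even number of black edges. -/
def cEven (P Q : Genome V) : ℕ := c P Q - cOdd P Q

/-- Change in the number of black-gray cycles (w.r.t. target `Q`) caused by the
rearrangement turning `A` into `B`. -/
def dC (Q A B : Genome V) : ℤ := (c B Q : ℤ) - (c A Q : ℤ)

def dCOdd (Q A B : Genome V) : ℤ := (cOdd B Q : ℤ) - (cOdd A Q : ℤ)

def dCEven (Q A B : Genome V) : ℤ := (cEven B Q : ℤ) - (cEven A Q : ℤ)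

/-- A transformation of `P` into `Q`: a sequence of genomes starting at `P`,
ending at `Q`, each consecutive pair related by a 3-break. -/
structure Transformation (P Q : Genome V) where
  steps : List (Genome V)
  chain : List.Chain Is3Break P steps
  last_eq : (P :: steps).getLast (List.cons_ne_nil _ _) = Q

namespace Transformation

variable {P Q : Genome V}

/-- The individual rearrangements of a transformation, as pairs (before, after). -/
def pairs (t : Transformation P Q) : List (Genome V × Genome V) :=
  (P :: t.steps).zip t.steps

/-- Length (number of rearrangements) of the transformation. -/
def len (t : Transformation P Q) : ℕ := t.steps.length

/-- Number of 2-breaks in `t`. -/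
def n2 (t : Transformation P Q) : ℕ :=
  t.pairs.countP fun r => r.1.changed r.2 == 4

/-- Number of complete 3-breaks in `t`. -/
def n3 (t : Transformation P Q) : ℕ :=
  t.pairs.countP fun r => r.1.changed r.2 == 6

/-- Total number of breakages (changed black edges) made by `t`. -/
def breakages (t : Transformation P Q) : ℕ :=
  (t.pairs.map fun r => r.1.changed r.2 / 2).sum

/-- Weight of a transformation with complete 3-breaks weighted `α`. -/
noncomputable def W (α : ℝ) (t : Transformation P Q) : ℝ := (t.n2 : ℝ) + α * t.n3

end Transformation

/-- The 3-break distance: minimum length of a transformation. -/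
noncomputable def d3 (P Q : Genome V) : ℕ :=
  sInf {m | ∃ t : Transformation P Q, t.len = m}

/-- The 2-break distance: minimum length of a transformation using only 2-breaks. -/
noncomputable def d2 (P Q : Genome V) : ℕ :=
  sInf {m | ∃ t : Transformation P Q,
    (∀ r ∈ t.pairs, Is2Break r.1 r.2) ∧ t.len = m}

/-- A transformation is optimal if it simultaneously has the shortest length and
makes the smallest number of breakages among all transformations from `P` to `Q`. -/
def IsOptimal {P Q : Genome V} (t : Transformation P Q) : Prop :=
  (∀ t' : Transformation P Q, t.len ≤ t'.len) ∧
  (∀ t' : Transformation P Q, t.breakages ≤ t'.breakages)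

/-- The weighted distance `D_α`. -/
noncomputable def Dist (α : ℝ) (P Q : Genome V) : ℝ :=
  sInf {w | ∃ t : Transformation P Q, Transformation.W α t = w}

end Genome

set_option linter.unusedSectionVars false
section Aux
open Equiv Equiv.Perm

variable {V : Type*} [Fintype V] [DecidableEq V]

def setoidOf (σ : Equiv.Perm V) : Setoid V :=
  ⟨σ.SameCycle, ⟨fun x => Equiv.Perm.SameCycle.refl σ x, fun h => h.symm, fun h h' => h.trans h'⟩⟩

lemma setoidOf_r (σ : Equiv.Perm V) (x y : V) : (setoidOf σ).r x y ↔ σ.SameCycle x y := Iff.rfl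

open scoped Classical in
noncomputable def cOf (s : Setoid V) (v : V) : Finset V :=
  univ.filter fun w => s.r v w

lemma mem_cOf {s : Setoid V} {v w : V} : w ∈ cOf s v ↔ s.r v w := by
  simp [cOf]

lemma cOf_eq_of_r {s : Setoid V} {u v : V} (h : s.r u v) : cOf s u = cOf s v := by
  ext w; simp only [mem_cOf]
  exact ⟨fun h' => s.iseqv.trans (s.iseqv.symm h) h', fun h' => s.iseqv.trans h h'⟩

lemma r_of_cOf_eq {s : Setoid V} {u v : V} (h : cOf s u = cOf s v) : s.r u v :=
  mem_cOf.1 (h ▸ mem_cOf.2 (s.iseqv.refl v))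

noncomputable def cls (s : Setoid V) : Finset (Finset V) := univ.image (cOf s)

lemma cOf_mem_cls (s : Setoid V) (v : V) : cOf s v ∈ cls s :=
  Finset.mem_image_of_mem _ (mem_univ v)

lemma mem_cls {s : Setoid V} {C : Finset V} : C ∈ cls s ↔ ∃ v, cOf s v = C := by
  simp [cls]

/-- join of a setoid with one extra identified pair. -/
def joinPair (s : Setoid V) (a b : V) : Setoid V where
  r x y := s.r x y ∨ (s.r x a ∧ s.r b y) ∨ (s.r x b ∧ s.r a y)
  iseqv := by
    refine ⟨fun x => Or.inl (s.iseqv.refl x), ?_, ?_⟩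
    · rintro x y (h | ⟨h1, h2⟩ | ⟨h1, h2⟩)
      · exact Or.inl (s.iseqv.symm h)
      · exact Or.inr (Or.inr ⟨s.iseqv.symm h2, s.iseqv.symm h1⟩)
      · exact Or.inr (Or.inl ⟨s.iseqv.symm h2, s.iseqv.symm h1⟩)
    · rintro x y z (h | ⟨h1, h2⟩ | ⟨h1, h2⟩) (h' | ⟨h1', h2'⟩ | ⟨h1', h2'⟩)
      · exact Or.inl (s.iseqv.trans h h')
      · exact Or.inr (Or.inl ⟨s.iseqv.trans h h1', h2'⟩)
      · exact Or.inr (Or.inr ⟨s.iseqv.trans h h1', h2'⟩)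
      · exact Or.inr (Or.inl ⟨h1, s.iseqv.trans h2 h'⟩)
      · exact Or.inl (s.iseqv.trans (s.iseqv.trans h1 (s.iseqv.symm (s.iseqv.trans h2 h1'))) h2')
      · exact Or.inl (s.iseqv.trans h1 h2')
      · exact Or.inr (Or.inr ⟨h1, s.iseqv.trans h2 h'⟩)
      · exact Or.inl (s.iseqv.trans h1 h2')
      · exact Or.inl (s.iseqv.trans (s.iseqv.trans h1 (s.iseqv.symm (s.iseqv.trans h2 h1'))) h2')

lemma joinPair_le {s : Setoid V} {a b x y : V} (h : s.r x y) : (joinPair s a b).r x y := Or.inl h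

lemma joinPair_pair (s : Setoid V) (a b : V) : (joinPair s a b).r a b :=
  Or.inr (Or.inl ⟨s.iseqv.refl a, s.iseqv.refl b⟩)

lemma joinPair_collapse {s : Setoid V} {a b : V} (hab : s.r a b) {x y : V} :
    (joinPair s a b).r x y ↔ s.r x y := by
  constructor
  · rintro (h | ⟨h1, h2⟩ | ⟨h1, h2⟩)
    · exact h
    · exact s.iseqv.trans (s.iseqv.trans h1 hab) h2
    · exact s.iseqv.trans (s.iseqv.trans h1 (s.iseqv.symm hab)) h2
  · exact Or.inl

open scoped Classical in
noncomputable def pushCls (t : Setoid V) (C : Finset V) : Finset V :=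
  univ.filter fun w => ∃ x ∈ C, t.r x w

lemma pushCls_cOf {s t : Setoid V} (h : ∀ x y, s.r x y → t.r x y) (v : V) :
    pushCls t (cOf s v) = cOf t v := by
  ext w
  simp only [pushCls, Finset.mem_filter, mem_univ, true_and, mem_cOf]
  constructor
  · rintro ⟨x, hx, hxw⟩; exact t.iseqv.trans (h _ _ hx) hxw
  · intro hw; exact ⟨v, s.iseqv.refl v, hw⟩

lemma cls_eq_image {s t : Setoid V} (h : ∀ x y, s.r x y → t.r x y) :
    cls t = (cls s).image (pushCls t) := by
  unfold cls
  rw [Finset.image_image]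
  exact Finset.image_congr fun v _ => (pushCls_cOf h v).symm

lemma card_cls_le_of_le {s t : Setoid V} (h : ∀ x y, s.r x y → t.r x y) :
    (cls t).card ≤ (cls s).card := by
  rw [cls_eq_image h]; exact Finset.card_image_le

/-- L2: adding one pair loses at most one class. -/
lemma card_cls_le_joinPair (s : Setoid V) (a b : V) :
    (cls s).card ≤ (cls (joinPair s a b)).card + 1 := by
  set t := joinPair s a b with ht
  have hle : ∀ x y, s.r x y → t.r x y := fun _ _ => joinPair_le
  have hinj : Set.InjOn (pushCls t) ((cls s).erase (cOf s b)) := by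
    intro C1 hC1 C2 hC2 hEq
    obtain ⟨v1, rfl⟩ := mem_cls.1 (Finset.mem_of_mem_erase hC1)
    obtain ⟨v2, rfl⟩ := mem_cls.1 (Finset.mem_of_mem_erase hC2)
    rw [pushCls_cOf hle, pushCls_cOf hle] at hEq
    rcases r_of_cOf_eq hEq with h | ⟨h1, h2⟩ | ⟨h1, h2⟩
    · exact cOf_eq_of_r h
    · exact absurd (cOf_eq_of_r (s.iseqv.symm h2)) fun hh =>
        (Finset.mem_erase.1 hC2).1 hh
    · exact absurd (cOf_eq_of_r h1) fun hh => (Finset.mem_erase.1 hC1).1 hh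
  have hmaps : ∀ C ∈ (cls s).erase (cOf s b), pushCls t C ∈ cls t := by
    intro C hC
    obtain ⟨v, rfl⟩ := mem_cls.1 (Finset.mem_of_mem_erase hC)
    rw [pushCls_cOf hle]; exact cOf_mem_cls t v
  have h1 : ((cls s).erase (cOf s b)).card ≤ (cls t).card :=
    Finset.card_le_card_of_injOn _ hmaps hinj
  have h2 : ((cls s).erase (cOf s b)).card = (cls s).card - 1 :=
    Finset.card_erase_of_mem (cOf_mem_cls s b)
  have h3 : 0 < (cls s).card := Finset.card_pos.2 ⟨_, cOf_mem_cls s b⟩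
  omega


lemma r_of_pow {s : Setoid V} {σ : Equiv.Perm V} (h : ∀ x, s.r x (σ x)) :
    ∀ (i : ℕ) (x : V), s.r x ((σ ^ i) x) := by
  intro i
  induction i with
  | zero => intro x; simpa using s.iseqv.refl x
  | succ i ih =>
      intro x
      have : (σ ^ (i + 1)) x = (σ ^ i) (σ x) := by
        rw [pow_succ]; rfl
      rw [this]
      exact s.iseqv.trans (h x) (ih (σ x))

lemma r_of_sameCycle {s : Setoid V} {σ : Equiv.Perm V} (h : ∀ x, s.r x (σ x))
    {x y : V} (hxy : σ.SameCycle x y) : s.r x y := by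
  obtain ⟨i, _, rfl⟩ := hxy.exists_pow_eq'
  exact r_of_pow h i x

lemma sameCycle_swap2_le (σ : Equiv.Perm V) (a b c d : V) {x y : V}
    (h : (σ * Equiv.swap a b * Equiv.swap c d).SameCycle x y) :
    (joinPair (joinPair (setoidOf σ) a b) c d).r x y := by
  set s := setoidOf σ
  set T := joinPair (joinPair s a b) c d with hT
  refine r_of_sameCycle (σ := σ * Equiv.swap a b * Equiv.swap c d) ?_ h
  intro x
  have h1 : ∀ z : V, T.r z (Equiv.swap c d z) := by
    intro z
    by_cases hc : z = c
    · subst hc; rw [Equiv.swap_apply_left]; exact joinPair_pair _ _ _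
    by_cases hd : z = d
    · subst hd; rw [Equiv.swap_apply_right]; exact T.iseqv.symm (joinPair_pair _ _ _)
    rw [Equiv.swap_apply_of_ne_of_ne hc hd]
  have h2 : ∀ z : V, T.r z (Equiv.swap a b z) := by
    intro z
    by_cases ha : z = a
    · subst ha; rw [Equiv.swap_apply_left]
      exact joinPair_le (joinPair_pair _ _ _)
    by_cases hb : z = b
    · subst hb; rw [Equiv.swap_apply_right]
      exact T.iseqv.symm (joinPair_le (joinPair_pair _ _ _))
    rw [Equiv.swap_apply_of_ne_of_ne ha hb]
  have h3 : ∀ z : V, T.r z (σ z) := fun z =>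
    joinPair_le (joinPair_le (⟨1, by simp⟩ : σ.SameCycle z (σ z)))
  have hx : (σ * Equiv.swap a b * Equiv.swap c d) x
      = σ (Equiv.swap a b (Equiv.swap c d x)) := by
    simp [Equiv.Perm.mul_apply]
  rw [hx]
  exact T.iseqv.trans (h1 x) (T.iseqv.trans (h2 _) (h3 _))

/-- crux inequality: multiplying by two swaps loses at most 2 classes. -/
lemma card_cls_swap2 (σ : Equiv.Perm V) (a b c d : V) :
    (cls (setoidOf σ)).card ≤
      (cls (setoidOf (σ * Equiv.swap a b * Equiv.swap c d))).card + 2 := by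
  have e1 := card_cls_le_joinPair (setoidOf σ) a b
  have e2 := card_cls_le_joinPair (joinPair (setoidOf σ) a b) c d
  have e3 : (cls (joinPair (joinPair (setoidOf σ) a b) c d)).card ≤
      (cls (setoidOf (σ * Equiv.swap a b * Equiv.swap c d))).card :=
    card_cls_le_of_le fun x y h => sameCycle_swap2_le σ a b c d h
  omega


open Genome in
lemma orbitsCard_eq_card_cls (σ : Equiv.Perm V) :
    orbitsCard σ = (cls (setoidOf σ)).card := by
  set s := setoidOf σ with hs
  have hfix : ∀ v ∈ σ.supportᶜ, cOf s v = {v} := by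
    intro v hv
    have hfv : σ v = v := by
      have := Finset.mem_compl.1 hv
      rwa [Equiv.Perm.notMem_support] at this
    ext w
    simp only [mem_cOf, Finset.mem_singleton]
    constructor
    · rintro ⟨k, hk⟩
      rw [Equiv.Perm.zpow_apply_eq_self_of_apply_eq_self hfv] at hk
      exact hk.symm
    · rintro rfl; exact s.iseqv.refl w
  have hsupp : ∀ v ∈ σ.support, cOf s v = (σ.cycleOf v).support := by
    intro v hv
    ext w
    rw [Equiv.Perm.mem_support_cycleOf_iff, mem_cOf]
    exact (and_iff_left hv).symm
  have hsplit : cls s = (σ.support.image (cOf s)) ∪ (σ.supportᶜ.image (cOf s)) := by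
    rw [← Finset.image_union, Finset.union_compl]; rfl
  have hdisj : Disjoint (σ.support.image (cOf s)) (σ.supportᶜ.image (cOf s)) := by
    rw [Finset.disjoint_left]
    rintro D hD1 hD2
    obtain ⟨v, hv, rfl⟩ := Finset.mem_image.1 hD1
    obtain ⟨w, hw, heq⟩ := Finset.mem_image.1 hD2
    have hvw : v ∈ ({w} : Finset V) := by
      rw [← hfix w hw, heq]
      exact mem_cOf.2 (s.iseqv.refl v)
    rw [Finset.mem_singleton] at hvw
    subst hvw
    exact (Finset.mem_compl.1 hw) hv
  have hcard2 : (σ.supportᶜ.image (cOf s)).card = σ.supportᶜ.card := by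
    rw [Finset.image_congr hfix]
    exact Finset.card_image_of_injOn fun x _ y _ h => Finset.singleton_injective h
  have himg : σ.support.image σ.cycleOf = σ.cycleFactorsFinset := by
    ext cc
    simp only [Finset.mem_image]
    constructor
    · rintro ⟨v, hv, rfl⟩
      exact Equiv.Perm.cycleOf_mem_cycleFactorsFinset_iff.2 hv
    · intro hc
      obtain ⟨x, hx1, -⟩ := (Equiv.Perm.mem_cycleFactorsFinset_iff.1 hc).1
      have hxc : x ∈ cc.support := Equiv.Perm.mem_support.2 hx1
      have hcx : cc = σ.cycleOf x := Equiv.Perm.cycle_is_cycleOf hxc hc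
      have hxσ : x ∈ σ.support := by
        have h2 := (Equiv.Perm.mem_cycleFactorsFinset_iff.1 hc).2 x hxc
        exact Equiv.Perm.mem_support.2 (by rw [← h2]; exact hx1)
      exact ⟨x, hxσ, hcx.symm⟩
  have hcard1 : (σ.support.image (cOf s)).card = Multiset.card σ.cycleType := by
    have e1 : σ.support.image (cOf s) = σ.cycleFactorsFinset.image Equiv.Perm.support := by
      rw [Finset.image_congr hsupp, ← himg, Finset.image_image]
      rfl
    rw [e1]
    have e2 : (σ.cycleFactorsFinset.image Equiv.Perm.support).card
        = σ.cycleFactorsFinset.card := by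
      apply Finset.card_image_of_injOn
      intro c1 hc1 c2 hc2 hsup
      by_contra hne
      have hd := (Equiv.Perm.cycleFactorsFinset_pairwise_disjoint σ) hc1 hc2 hne
      have hds := Equiv.Perm.Disjoint.disjoint_support hd
      rw [hsup] at hds
      obtain ⟨x, hx1, -⟩ := (Equiv.Perm.mem_cycleFactorsFinset_iff.1 (by exact_mod_cast hc2)).1
      exact Finset.disjoint_left.1 hds (Equiv.Perm.mem_support.2 hx1)
        (Equiv.Perm.mem_support.2 hx1)
    rw [e2, Equiv.Perm.cycleType_def, Multiset.card_map]
    rfl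
  have hfixcard : (univ.filter fun v => σ v = v) = σ.supportᶜ := by
    ext v
    simp [Equiv.Perm.notMem_support]
  rw [hs] at hsplit
  rw [orbitsCard, hfixcard, hsplit, Finset.card_union_of_disjoint hdisj, hcard1, hcard2]

lemma sameCycle_fixed {σ : Equiv.Perm V} {z y : V} (hz : σ z = z)
    (h : σ.SameCycle z y) : y = z := by
  obtain ⟨k, hk⟩ := h
  rw [Equiv.Perm.zpow_apply_eq_self_of_apply_eq_self hz] at hk
  exact hk.symm

lemma cOf_fixed {σ : Equiv.Perm V} {z : V} (hz : σ z = z) :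
    cOf (setoidOf σ) z = {z} := by
  ext w
  simp only [mem_cOf, Finset.mem_singleton]
  exact ⟨fun h => sameCycle_fixed hz h, fun h => h ▸ (setoidOf σ).iseqv.refl w⟩

/-- counting: a map collapsing two disjoint pairs loses at least two. -/
lemma card_image_add_two_le {α β : Type*} [DecidableEq α] [DecidableEq β]
    (X : Finset α) (f : α → β) (C1 C2 C3 C4 : α)
    (m1 : C1 ∈ X) (m2 : C2 ∈ X) (m3 : C3 ∈ X) (m4 : C4 ∈ X)
    (h12 : C1 ≠ C2) (h13 : C1 ≠ C3) (h14 : C1 ≠ C4) (h23 : C2 ≠ C3)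
    (h34 : C3 ≠ C4) (e12 : f C1 = f C2) (e34 : f C3 = f C4) :
    (X.image f).card + 2 ≤ X.card := by
  have himg : X.image f = ((X.erase C1).erase C3).image f := by
    apply Finset.Subset.antisymm
    · intro b hb
      obtain ⟨x, hx, rfl⟩ := Finset.mem_image.1 hb
      by_cases h1 : x = C1
      · subst h1
        exact Finset.mem_image.2 ⟨C2, by simp [Finset.mem_erase, h12.symm, h23, m2], e12.symm ▸ rfl⟩
      by_cases h3 : x = C3
      · subst h3
        exact Finset.mem_image.2 ⟨C4, by simp [Finset.mem_erase, h34.symm, h14.symm, m4], e34.symm ▸ rfl⟩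
      · exact Finset.mem_image.2 ⟨x, by simp [Finset.mem_erase, h1, h3, hx], rfl⟩
    · exact Finset.image_subset_image (fun x hx => Finset.mem_of_mem_erase (Finset.mem_of_mem_erase hx))
  have hm3 : C3 ∈ X.erase C1 := Finset.mem_erase.2 ⟨fun h => h13 h.symm, m3⟩
  have ha := Finset.card_erase_of_mem hm3
  have hb2 := Finset.card_erase_of_mem m1
  have hge : 2 ≤ X.card := by
    have := Finset.card_erase_of_mem m1
    have hpos : 0 < (X.erase C1).card := Finset.card_pos.2 ⟨C3, hm3⟩
    omega
  have := Finset.card_image_le (s := (X.erase C1).erase C3) (f := f)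
  rw [← himg] at this
  omega


open Genome

lemma perm_mul_self (P : Genome V) : P.perm * P.perm = 1 :=
  Equiv.ext fun v => by simp [Equiv.Perm.mul_apply, P.invol v]

lemma perm_inv (P : Genome V) : P.perm⁻¹ = P.perm :=
  inv_eq_of_mul_eq_one_right (perm_mul_self P)

lemma genome_ext {A B : Genome V} (h : A.perm = B.perm) : A = B := by
  cases A; cases B; simpa using h

lemma c_self (Qg : Genome V) {n : ℕ} (hV : Fintype.card V = 2 * n) : c Qg Qg = n := by
  have h1 : sigma Qg Qg = 1 := perm_mul_self Qg
  rw [c, h1, orbitsCard]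
  have h2 : (univ.filter fun v => (1 : Equiv.Perm V) v = v) = univ :=
    Finset.filter_true_of_mem fun x _ => rfl
  rw [Equiv.Perm.cycleType_one, h2, Finset.card_univ, hV, Multiset.card_zero]
  omega

lemma support_filter_eq (σ : Equiv.Perm V) :
    (univ.filter fun v => σ v = v).card + σ.support.card = Fintype.card V := by
  have h := Finset.card_filter_add_card_filter_not
    (s := (univ : Finset V)) (p := fun v => σ v = v)
  have h2 : (univ.filter fun v => ¬ σ v = v) = σ.support :=
    Finset.ext fun v => by simp [Equiv.Perm.mem_support]
  rw [h2] at h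
  simpa [Finset.card_univ] using h

lemma two_card_cycleType_le (σ : Equiv.Perm V) :
    2 * Multiset.card σ.cycleType ≤ σ.support.card := by
  have h := Multiset.card_nsmul_le_sum (s := σ.cycleType)
    (fun x hx => Equiv.Perm.two_le_of_mem_cycleType hx)
  rw [Equiv.Perm.sum_cycleType] at h
  rw [smul_eq_mul, mul_comm] at h
  exact h

lemma c_le_n (A Qg : Genome V) {n : ℕ} (hV : Fintype.card V = 2 * n) : c A Qg ≤ n := by
  have h1 := support_filter_eq (sigma A Qg)
  have h2 := two_card_cycleType_le (sigma A Qg)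
  rw [hV] at h1
  rw [c, orbitsCard]
  omega

lemma is2Break_symm {A B : Genome V} (h : Is2Break A B) : Is2Break B A := by
  rw [Is2Break, changed] at h ⊢
  rw [show (univ.filter fun v => B.perm v ≠ A.perm v) = univ.filter fun v => A.perm v ≠ B.perm v
    from Finset.ext fun v => by simp [ne_comm]]
  exact h

lemma two_break_decomp {A B : Genome V} (h : Is2Break A B) :
    ∃ a b cc d : V, A.perm * B.perm = Equiv.swap a d * Equiv.swap b cc := by
  classical
  set S := univ.filter (fun v => A.perm v ≠ B.perm v) with hS
  have hcard : S.card = 4 := h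
  have hclA : ∀ x ∈ S, A.perm x ∈ S := by
    intro x hx
    rw [hS, Finset.mem_filter] at hx ⊢
    refine ⟨mem_univ _, fun hc => ?_⟩
    have h1 : B.perm (A.perm x) = x := by rw [← hc, A.invol]
    have h2 := congrArg B.perm h1
    rw [B.invol] at h2
    exact hx.2 h2
  have hclB : ∀ x ∈ S, B.perm x ∈ S := by
    intro x hx
    rw [hS, Finset.mem_filter] at hx ⊢
    refine ⟨mem_univ _, fun hc => ?_⟩
    have h1 : A.perm (B.perm x) = x := by rw [hc, B.invol]
    have h2 := congrArg A.perm h1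
    rw [A.invol] at h2
    exact hx.2 h2.symm
  have hne : S.Nonempty := by rw [← Finset.card_pos, hcard]; norm_num
  obtain ⟨v, hv⟩ := hne
  have hvS : A.perm v ≠ B.perm v := (Finset.mem_filter.1 hv).2
  obtain ⟨b, hb⟩ : ∃ b, A.perm v = b := ⟨_, rfl⟩
  obtain ⟨cc, hc⟩ : ∃ cc, B.perm v = cc := ⟨_, rfl⟩
  obtain ⟨d, hd⟩ : ∃ d, A.perm cc = d := ⟨_, rfl⟩
  have hAb : A.perm b = v := by rw [← hb, A.invol]
  have hBcc : B.perm cc = v := by rw [← hc, B.invol]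
  have hAd : A.perm d = cc := by rw [← hd, A.invol]
  have hab : v ≠ b := fun h' => A.noFix v (hb ▸ h'.symm)
  have hac : v ≠ cc := fun h' => B.noFix v (hc ▸ h'.symm)
  have hbc : b ≠ cc := by rw [← hb, ← hc]; exact hvS
  have had : v ≠ d := by
    intro h'
    apply hbc
    rw [← hb, h', hAd]
  have hbd : b ≠ d := by
    intro h'
    apply hac
    rw [← hAb, h', hAd]
  have hcd : cc ≠ d := fun h' => A.noFix cc (hd.trans h'.symm)
  have haS : v ∈ S := hv
  have hbS : b ∈ S := hb ▸ hclA v hv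
  have hcS : cc ∈ S := hc ▸ hclB v hv
  have hdS : d ∈ S := by
    rw [← hd, ← hc]
    exact hclA _ (hclB v hv)
  have hquadcard : ({v, b, cc, d} : Finset V).card = 4 := by
    rw [Finset.card_insert_of_notMem (by simp [hab, hac, had]),
        Finset.card_insert_of_notMem (by simp [hbc, hbd]),
        Finset.card_insert_of_notMem (by simp [hcd]),
        Finset.card_singleton]
  have hsub : ({v, b, cc, d} : Finset V) ⊆ S := by
    intro x hx
    simp only [Finset.mem_insert, Finset.mem_singleton] at hx
    rcases hx with rfl | rfl | rfl | rfl <;> assumption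
  have hSeq : S = ({v, b, cc, d} : Finset V) :=
    (Finset.eq_of_subset_of_card_le hsub (by omega)).symm
  have hmemS : ∀ x, x ∈ S ↔ (x = v ∨ x = b ∨ x = cc ∨ x = d) := by
    intro x
    rw [hSeq]
    simp [Finset.mem_insert]
  have hBb : B.perm b = d := by
    have hm := (hmemS _).1 (hclB b hbS)
    have h1 : B.perm b ≠ v := by
      intro h'
      have h2 := congrArg B.perm h'
      rw [B.invol] at h2
      exact hbc (h2.trans hc)
    have h2 : B.perm b ≠ b := B.noFix b
    have h3 : B.perm b ≠ cc := by
      intro h'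
      rw [← hc] at h'
      exact hab (B.perm.injective h').symm
    tauto
  have hBd : B.perm d = b := by rw [← hBb, B.invol]
  refine ⟨v, b, cc, d, Equiv.ext fun x => ?_⟩
  rw [Equiv.Perm.mul_apply, Equiv.Perm.mul_apply]
  by_cases hxS : x ∈ S
  · rcases (hmemS x).1 hxS with rfl | rfl | rfl | rfl
    · rw [hc, hd, Equiv.swap_apply_of_ne_of_ne hab hac, Equiv.swap_apply_left]
    · rw [hBb, hAd, Equiv.swap_apply_left, Equiv.swap_apply_of_ne_of_ne hac.symm hcd]
    · rw [hBcc, hb, Equiv.swap_apply_right, Equiv.swap_apply_of_ne_of_ne hab.symm hbd]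
    · rw [hBd, hAb, Equiv.swap_apply_of_ne_of_ne hbd.symm hcd.symm, Equiv.swap_apply_right]
  · have hxfix : B.perm x = A.perm x := by
      by_contra hne
      exact hxS (Finset.mem_filter.2 ⟨mem_univ x, fun hh => hne hh.symm⟩)
    have hxa : x ≠ v := fun h' => hxS (h' ▸ haS)
    have hxb : x ≠ b := fun h' => hxS (h' ▸ hbS)
    have hxc : x ≠ cc := fun h' => hxS (h' ▸ hcS)
    have hxd : x ≠ d := fun h' => hxS (h' ▸ hdS)
    rw [hxfix, A.invol, Equiv.swap_apply_of_ne_of_ne hxb hxc,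
      Equiv.swap_apply_of_ne_of_ne hxa hxd]

lemma sigma_shift {A B Qg : Genome V} {w x y z : V}
    (hdec : B.perm * A.perm = Equiv.swap w x * Equiv.swap y z) :
    sigma A Qg = sigma B Qg * Equiv.swap w x * Equiv.swap y z := by
  have h1 : sigma B Qg * (B.perm * A.perm) = sigma A Qg := by
    simp only [sigma]
    rw [mul_assoc, ← mul_assoc B.perm, perm_mul_self, one_mul]
  rw [← h1, hdec, ← mul_assoc]

lemma c_step_le {A B Qg : Genome V} (h : Is2Break A B) : c B Qg ≤ c A Qg + 1 := by
  obtain ⟨w, x, y, z, hdec⟩ := two_break_decomp (is2Break_symm h)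
  have hsig : sigma A Qg = sigma B Qg * Equiv.swap w z * Equiv.swap x y :=
    sigma_shift hdec
  have hcr := card_cls_swap2 (sigma B Qg) w z x y
  rw [← hsig, ← orbitsCard_eq_card_cls, ← orbitsCard_eq_card_cls] at hcr
  rw [c, c]
  omega

lemma mirror (P Qg : Genome V) (v : V) : ¬ (sigma P Qg).SameCycle v (Qg.perm v) := by
  rintro ⟨k, hk⟩
  set σ := sigma P Qg with hσ
  have hQinv : Qg.perm⁻¹ = Qg.perm := perm_inv Qg
  have h1 : Qg.perm * σ * Qg.perm⁻¹ = σ⁻¹ := by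
    rw [hQinv, hσ]
    simp only [sigma, mul_inv_rev, perm_inv]
    rw [← mul_assoc, perm_mul_self, one_mul]
  have hconj : ∀ j : ℤ, Qg.perm * σ ^ j * Qg.perm = σ ^ (-j) := by
    intro j
    calc Qg.perm * σ ^ j * Qg.perm = Qg.perm * σ ^ j * Qg.perm⁻¹ := by rw [hQinv]
      _ = (Qg.perm * σ * Qg.perm⁻¹) ^ j := (conj_zpow).symm
      _ = (σ⁻¹) ^ j := by rw [h1]
      _ = σ ^ (-j) := by rw [inv_zpow, zpow_neg]
  have happ : ∀ j : ℤ, Qg.perm ((σ ^ j) v) = (σ ^ (k - j)) v := by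
    intro j
    have h2 : (Qg.perm * σ ^ j * Qg.perm) (Qg.perm v) = (σ ^ (-j)) (Qg.perm v) := by
      rw [hconj j]
    simp only [Equiv.Perm.mul_apply, Qg.invol] at h2
    rw [h2, ← hk, ← Equiv.Perm.mul_apply, ← zpow_add, sub_eq_neg_add]
  have hPQ : P.perm = Qg.perm * σ := by
    rw [hσ]
    simp only [sigma]
    rw [← mul_assoc, perm_mul_self, one_mul]
  have happP : ∀ j : ℤ, P.perm ((σ ^ j) v) = (σ ^ (k - j - 1)) v := by
    intro j
    have h3 : (σ ^ (j + 1)) v = σ ((σ ^ j) v) := by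
      rw [show j + 1 = 1 + j from by ring, zpow_add, zpow_one, Equiv.Perm.mul_apply]
    have h4 := happ (j + 1)
    rw [h3] at h4
    rw [hPQ, Equiv.Perm.mul_apply, h4, show k - (j + 1) = k - j - 1 from by ring]
  rcases Int.even_or_odd k with ⟨j, hj⟩ | ⟨j, hj⟩
  · have hnf := Qg.noFix ((σ ^ j) v)
    rw [happ j] at hnf
    exact hnf (by rw [show k - j = j from by omega])
  · have hnf := P.noFix ((σ ^ j) v)
    rw [happP j] at hnf
    exact hnf (by rw [show k - j - 1 = j from by omega])


lemma exists_step (P Qg : Genome V) (hne : P.perm ≠ Qg.perm) :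
    ∃ P' : Genome V, Is2Break P P' ∧ c P Qg + 1 ≤ c P' Qg := by
  classical
  have hex : ∃ v, P.perm v ≠ Qg.perm v := by
    by_contra h'
    push_neg at h'
    exact hne (Equiv.ext h')
  obtain ⟨v, hv⟩ := hex
  obtain ⟨b, hb⟩ : ∃ b, P.perm v = b := ⟨_, rfl⟩
  obtain ⟨q, hq⟩ : ∃ q, Qg.perm v = q := ⟨_, rfl⟩
  obtain ⟨w, hw⟩ : ∃ w, P.perm q = w := ⟨_, rfl⟩
  have hPb : P.perm b = v := by rw [← hb, P.invol]
  have hQq : Qg.perm q = v := by rw [← hq, Qg.invol]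
  have hPw : P.perm w = q := by rw [← hw, P.invol]
  have hbq : b ≠ q := by rw [← hb, ← hq]; exact hv
  have hvb : v ≠ b := fun h' => P.noFix v (hb ▸ h'.symm)
  have hvq : v ≠ q := fun h' => Qg.noFix v (hq ▸ h'.symm)
  have hqw : q ≠ w := fun h' => P.noFix q (hw ▸ h'.symm)
  have hvw : v ≠ w := by
    intro h'
    apply hbq
    rw [← hb, h', hPw]
  have hbw : b ≠ w := by
    intro h'
    apply hvq
    rw [← hPb, h', hPw]
  set π := P.perm * Equiv.swap v w * Equiv.swap q b with hπdef
  have happly : ∀ x, π x = P.perm (Equiv.swap v w (Equiv.swap q b x)) := fun x => rfl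
  have hπv : π v = q := by
    rw [happly, Equiv.swap_apply_of_ne_of_ne hvq hvb, Equiv.swap_apply_left, hPw]
  have hπq : π q = v := by
    rw [happly, Equiv.swap_apply_left, Equiv.swap_apply_of_ne_of_ne hvb.symm hbw, hPb]
  have hπb : π b = w := by
    rw [happly, Equiv.swap_apply_right, Equiv.swap_apply_of_ne_of_ne hvq.symm hqw, hw]
  have hπw : π w = b := by
    rw [happly, Equiv.swap_apply_of_ne_of_ne hqw.symm hbw.symm, Equiv.swap_apply_right, hb]
  have hπelse : ∀ x, x ≠ v → x ≠ q → x ≠ b → x ≠ w → π x = P.perm x := by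
    intro x h1 h2 h3 h4
    rw [happly, Equiv.swap_apply_of_ne_of_ne h2 h3, Equiv.swap_apply_of_ne_of_ne h1 h4]
  have hquadP : ∀ x, x ≠ v → x ≠ q → x ≠ b → x ≠ w →
      (P.perm x ≠ v ∧ P.perm x ≠ q ∧ P.perm x ≠ b ∧ P.perm x ≠ w) := by
    intro x h1 h2 h3 h4
    refine ⟨fun h' => ?_, fun h' => ?_, fun h' => ?_, fun h' => ?_⟩
    · apply h3; have := congrArg P.perm h'; rwa [P.invol, hb] at this
    · apply h4; have := congrArg P.perm h'; rwa [P.invol, hw] at this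
    · apply h1; have := congrArg P.perm h'; rwa [P.invol, hPb] at this
    · apply h2; have := congrArg P.perm h'; rwa [P.invol, hPw] at this
  have hinvol : ∀ x, π (π x) = x := by
    intro x
    by_cases h1 : x = v
    · subst h1; rw [hπv, hπq]
    by_cases h2 : x = q
    · subst h2; rw [hπq, hπv]
    by_cases h3 : x = b
    · subst h3; rw [hπb, hπw]
    by_cases h4 : x = w
    · subst h4; rw [hπw, hπb]
    obtain ⟨g1, g2, g3, g4⟩ := hquadP x h1 h2 h3 h4
    rw [hπelse x h1 h2 h3 h4, hπelse _ g1 g2 g3 g4, P.invol]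
  have hnofix : ∀ x, π x ≠ x := by
    intro x
    by_cases h1 : x = v
    · subst h1; rw [hπv]; exact hvq.symm
    by_cases h2 : x = q
    · subst h2; rw [hπq]; exact hvq
    by_cases h3 : x = b
    · subst h3; rw [hπb]; exact hbw.symm
    by_cases h4 : x = w
    · subst h4; rw [hπw]; exact hbw
    rw [hπelse x h1 h2 h3 h4]
    exact P.noFix x
  refine ⟨⟨π, hinvol, hnofix⟩, ?_, ?_⟩
  · -- Is2Break
    rw [Is2Break, changed]
    have hset : (univ.filter fun x => P.perm x ≠ π x) = {v, q, b, w} := by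
      ext x
      simp only [Finset.mem_filter, mem_univ, true_and, Finset.mem_insert,
        Finset.mem_singleton]
      constructor
      · intro hx
        by_contra hcon
        push_neg at hcon
        obtain ⟨n1, n2, n3, n4⟩ := hcon
        exact hx (hπelse x n1 n2 n3 n4).symm
      · rintro (rfl | rfl | rfl | rfl)
        · rw [hπv, hb]; exact hbq
        · rw [hπq, hw]; exact fun h' => hvw h'.symm
        · rw [hπb, hPb]; exact hvw
        · rw [hπw, hPw]; exact fun h' => hbq h'.symm
    rw [hset]
    rw [Finset.card_insert_of_notMem (by simp [hvq, hvb, hvw]),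
        Finset.card_insert_of_notMem (by simp [Ne.symm hbq, hqw]),
        Finset.card_insert_of_notMem (by simp [hbw]),
        Finset.card_singleton]
  · -- c increases
    set σ := sigma P Qg with hσdef
    set P' : Genome V := ⟨π, hinvol, hnofix⟩ with hP'
    have hσ' : sigma P' Qg = σ * Equiv.swap v w * Equiv.swap q b := by
      simp only [sigma, hσdef]
      show Qg.perm * π = _
      rw [hπdef, ← mul_assoc, ← mul_assoc]
    have hσw : σ w = v := by
      show Qg.perm (P.perm w) = v
      rw [hPw, hQq]
    have hσb : σ b = q := by
      show Qg.perm (P.perm b) = q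
      rw [hPb, hq]
    have hσ'v : (sigma P' Qg) v = v := by
      rw [hσ']
      show σ (Equiv.swap v w (Equiv.swap q b v)) = v
      rw [Equiv.swap_apply_of_ne_of_ne hvq hvb, Equiv.swap_apply_left, hσw]
    have hσ'q : (sigma P' Qg) q = q := by
      rw [hσ']
      show σ (Equiv.swap v w (Equiv.swap q b q)) = q
      rw [Equiv.swap_apply_left, Equiv.swap_apply_of_ne_of_ne hvb.symm hbw, hσb]
    set s := setoidOf σ with hsdef
    set s' := setoidOf (sigma P' Qg) with hs'def
    have hrvw : s.r v w := (setoidOf σ).iseqv.symm ⟨1, by rw [zpow_one]; exact hσw⟩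
    have hrqb : s.r q b := (setoidOf σ).iseqv.symm ⟨1, by rw [zpow_one]; exact hσb⟩
    have hs'le : ∀ x y, s'.r x y → s.r x y := by
      intro x y hxy
      have hxy' : (σ * Equiv.swap v w * Equiv.swap q b).SameCycle x y := by
        rw [← hσ']
        exact hxy
      have hT := sameCycle_swap2_le σ v w q b hxy' 
      have hc1 : ∀ {x' y'}, (joinPair s v w).r x' y' ↔ s.r x' y' := joinPair_collapse hrvw
      have hc2 : (joinPair s v w).r q b := joinPair_le hrqb
      have := (joinPair_collapse hc2).1 hT
      exact hc1.1 this
    have hfix1 : cOf s' v = {v} := cOf_fixed hσ'v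
    have hfix3 : cOf s' q = {q} := cOf_fixed hσ'q
    have hC12 : cOf s' v ≠ cOf s' w := by
      intro h'
      exact hvw (sameCycle_fixed hσ'v (r_of_cOf_eq h')).symm
    have hC13 : cOf s' v ≠ cOf s' q := by
      rw [hfix1, hfix3]
      exact fun h' => hvq (Finset.singleton_injective h')
    have hC14 : cOf s' v ≠ cOf s' b := by
      intro h'
      exact hvb (sameCycle_fixed hσ'v (r_of_cOf_eq h')).symm
    have hC23 : cOf s' w ≠ cOf s' q := by
      intro h'
      exact hqw (sameCycle_fixed hσ'q (r_of_cOf_eq h'.symm)).symm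
    have hC34 : cOf s' q ≠ cOf s' b := by
      intro h'
      exact hbq (sameCycle_fixed hσ'q (r_of_cOf_eq h'))
    have e12 : pushCls s (cOf s' v) = pushCls s (cOf s' w) := by
      rw [pushCls_cOf hs'le, pushCls_cOf hs'le]
      exact cOf_eq_of_r hrvw
    have e34 : pushCls s (cOf s' q) = pushCls s (cOf s' b) := by
      rw [pushCls_cOf hs'le, pushCls_cOf hs'le]
      exact cOf_eq_of_r hrqb
    have himage : cls s = (cls s').image (pushCls s) := cls_eq_image hs'le
    have hcount := card_image_add_two_le (cls s') (pushCls s)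
      (cOf s' v) (cOf s' w) (cOf s' q) (cOf s' b)
      (cOf_mem_cls s' v) (cOf_mem_cls s' w) (cOf_mem_cls s' q) (cOf_mem_cls s' b)
      hC12 hC13 hC14 hC23 hC34 e12 e34
    rw [← himage] at hcount
    simp only [c]
    have ho1 := orbitsCard_eq_card_cls (sigma P Qg)
    have ho2 := orbitsCard_eq_card_cls (sigma P' Qg)
    rw [hsdef, hσdef, hs'def] at hcount
    omega


lemma exists_transformation (Qg : Genome V) {n : ℕ} (hV : Fintype.card V = 2 * n) :
    ∀ (k : ℕ) (P : Genome V), n - c P Qg ≤ k →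
      ∃ t : Transformation P Qg, (∀ r ∈ t.pairs, Is2Break r.1 r.2) ∧
        t.len ≤ n - c P Qg := by
  intro k
  induction k with
  | zero =>
      intro P hk
      by_cases heq : P.perm = Qg.perm
      · have hPQ : P = Qg := genome_ext heq
        subst hPQ
        refine ⟨⟨[], List.Chain.nil, rfl⟩, ?_, ?_⟩
        · intro r hr
          simp [Transformation.pairs] at hr
        · exact Nat.zero_le _
      · obtain ⟨P', h2, hc⟩ := exists_step P Qg heq
        have := c_le_n P' Qg hV
        omega
  | succ k ih =>
      intro P hk
      by_cases heq : P.perm = Qg.perm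
      · have hPQ : P = Qg := genome_ext heq
        subst hPQ
        refine ⟨⟨[], List.Chain.nil, rfl⟩, ?_, ?_⟩
        · intro r hr
          simp [Transformation.pairs] at hr
        · exact Nat.zero_le _
      · obtain ⟨P', h2, hc⟩ := exists_step P Qg heq
        have hcn := c_le_n P' Qg hV
        have hcn0 := c_le_n P Qg hV
        have hk' : n - c P' Qg ≤ k := by omega
        obtain ⟨t', hall', hlen'⟩ := ih P' hk'
        have hch : List.Chain Is3Break P (P' :: t'.steps) :=
          List.Chain.cons (Or.inl h2) t'.chain
        have hlast : (P :: P' :: t'.steps).getLast (List.cons_ne_nil _ _) = Qg := by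
          rw [List.getLast_cons (List.cons_ne_nil _ _)]
          exact t'.last_eq
        refine ⟨⟨P' :: t'.steps, hch, hlast⟩, ?_, ?_⟩
        · intro r hr
          have hpp : (⟨P' :: t'.steps, hch, hlast⟩ : Transformation P Qg).pairs
              = (P, P') :: t'.pairs := rfl
          rw [hpp] at hr
          rcases List.mem_cons.1 hr with rfl | hr'
          · exact h2
          · exact hall' r hr'
        · have hlen : (⟨P' :: t'.steps, hch, hlast⟩ : Transformation P Qg).len
              = t'.len + 1 := by
            simp [Transformation.len]
          rw [hlen]
          omega

lemma lower_bound (Qg : Genome V) {n : ℕ} (hV : Fintype.card V = 2 * n) :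
    ∀ (steps : List (Genome V)) (P : Genome V),
      (P :: steps).getLast (List.cons_ne_nil _ _) = Qg →
      (∀ r ∈ (P :: steps).zip steps, Is2Break r.1 r.2) →
      n ≤ c P Qg + steps.length := by
  intro steps
  induction steps with
  | nil =>
      intro P hlast _
      have hPQ : P = Qg := hlast
      subst hPQ
      rw [c_self P hV]
      simp
  | cons B rest ih =>
      intro P hlast hall
      have h2 : Is2Break P B := by
        apply hall (P, B)
        rw [List.zip_cons_cons]
        exact List.mem_cons_self
      have hlast' : (B :: rest).getLast (List.cons_ne_nil _ _) = Qg := by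
        rw [← hlast, List.getLast_cons (List.cons_ne_nil _ _)]
      have hall' : ∀ r ∈ (B :: rest).zip rest, Is2Break r.1 r.2 := by
        intro r hr
        apply hall r
        rw [List.zip_cons_cons]
        exact List.mem_cons_of_mem _ hr
      have hih := ih B hlast' hall'
      have hstep := c_step_le (Qg := Qg) h2
      simp only [List.length_cons]
      omega

end Aux


open Genome in
/-- the 2-break distance equals `n - c(P,Q)` for genomes on `n` genes. -/
theorem stmt3 {V : Type*} [Fintype V] [DecidableEq V] (n : ℕ)
    (hV : Fintype.card V = 2 * n) (P Q : Genome V) :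
    (d2 P Q : ℤ) = (n : ℤ) - c P Q := by
  obtain ⟨t0, hall0, hlen0⟩ := exists_transformation Q hV (n - c P Q) P le_rfl
  have hmem : t0.len ∈ {m | ∃ t : Transformation P Q,
      (∀ r ∈ t.pairs, Is2Break r.1 r.2) ∧ t.len = m} := ⟨t0, hall0, rfl⟩
  have hlbS : ∀ m ∈ {m | ∃ t : Transformation P Q,
      (∀ r ∈ t.pairs, Is2Break r.1 r.2) ∧ t.len = m}, n - c P Q ≤ m := by
    rintro m ⟨t, hall, rfl⟩
    have hlow := lower_bound Q hV t.steps P t.last_eq hall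
    have hlen : t.len = t.steps.length := rfl
    omega
  have hd2 : d2 P Q = n - c P Q := by
    rw [d2]
    apply le_antisymm
    · exact le_trans (Nat.sInf_le hmem) hlen0
    · exact le_csInf ⟨_, hmem⟩ hlbS
  have hcle := c_le_n P Q hV
  rw [hd2, Nat.cast_sub hcle]
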